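/- Assume the field F is finite. Then every (p+)-filter on E is a strong (p+)-filter. -/

import Mathlib

namespace BlockPaper

variable {F : Type} [Field F]

/-- `X` is an infinite block sequence in `E = ⊕ₙ F`. -/
def IsBlock (X : ℕ → (ℕ →₀ F)) : Prop :=
  (∀ n, X n ≠ 0) ∧ ∀ n, ∀ i ∈ (X n).support, ∀ j ∈ (X (n + 1)).support, i < j

/-- `⟨X⟩`: the linear span of the entries of `X`, with `0` removed. -/
def spanSet (X : ℕ → (ℕ →₀ F)) : Set (ℕ →₀ F) :=
  {v | v ≠ 0 ∧ v ∈ Submodule.span F (Set.range X)}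

/-- `⟨X/n⟩`: the span (minus `0`) of the entries of `X` whose supports lie entirely above `n`. -/
def tailSpanSet (X : ℕ → (ℕ →₀ F)) (n : ℕ) : Set (ℕ →₀ F) :=
  {v | v ≠ 0 ∧ v ∈ Submodule.span F {x : ℕ →₀ F | (∃ k, X k = x) ∧ ∀ i ∈ x.support, n < i}}

/-- `X ⪯ Y`. -/
def PLE (X Y : ℕ → (ℕ →₀ F)) : Prop := spanSet X ⊆ spanSet Y

/-- `X ⪯* Y`. -/
def PLEs (X Y : ℕ → (ℕ →₀ F)) : Prop := ∃ n, tailSpanSet X n ⊆ spanSet Y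

/-- A block filter on `E`: a proper filter of subsets of `E ∖ {0}` containing all
finite-codimensional subspaces (minus `0`) and with a base of sets `⟨X⟩`, `X ∈ E^[∞]`. -/
structure BlockFilter (F : Type) [Field F] where
  sets : Set (Set (ℕ →₀ F))
  nonzero : ∀ S ∈ sets, ∀ v ∈ S, v ≠ 0
  proper : ∅ ∉ sets
  upward : ∀ S ∈ sets, ∀ T : Set (ℕ →₀ F), (∀ v ∈ T, v ≠ 0) → S ⊆ T → T ∈ sets
  inter : ∀ S ∈ sets, ∀ T ∈ sets, S ∩ T ∈ sets
  codim : ∀ V : Submodule F (ℕ →₀ F), Module.Finite F ((ℕ →₀ F) ⧸ V) →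
    {v : ℕ →₀ F | v ≠ 0 ∧ v ∈ V} ∈ sets
  blockBase : ∀ S ∈ sets, ∃ X : ℕ → (ℕ →₀ F),
    IsBlock X ∧ spanSet X ∈ sets ∧ spanSet X ⊆ S

/-- `D ⊆ E` is `𝓕`-dense. -/
def FDense (𝓕 : BlockFilter F) (D : Set (ℕ →₀ F)) : Prop :=
  ∀ X : ℕ → (ℕ →₀ F), IsBlock X → spanSet X ∈ 𝓕.sets →
    ∃ V : Submodule F (ℕ →₀ F), ¬ Module.Finite F V ∧
      (V : Set (ℕ →₀ F)) \ {0} ⊆ spanSet X ∩ D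

/-- `𝓕` is full: every `𝓕`-dense set belongs to `𝓕`. -/
def Full (𝓕 : BlockFilter F) : Prop :=
  ∀ D : Set (ℕ →₀ F), FDense 𝓕 D → D \ {0} ∈ 𝓕.sets

/-- `𝓕` is a `(p)`-filter. -/
def PFilter (𝓕 : BlockFilter F) : Prop :=
  ∀ Xs : ℕ → ℕ → (ℕ →₀ F), (∀ n, IsBlock (Xs n) ∧ spanSet (Xs n) ∈ 𝓕.sets) →
    ∃ X : ℕ → (ℕ →₀ F), IsBlock X ∧ spanSet X ∈ 𝓕.sets ∧ ∀ n, PLEs X (Xs n)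

/-- `𝓕` is a `(p⁺)`-filter: full and a `(p)`-filter. -/
def PPlus (𝓕 : BlockFilter F) : Prop := Full 𝓕 ∧ PFilter 𝓕

/-- A finite block sequence in `E`, as a list. -/
def IsBlockList (l : List (ℕ →₀ F)) : Prop :=
  (∀ v ∈ l, v ≠ 0) ∧
    l.Chain' (fun u v : ℕ →₀ F => ∀ i ∈ u.support, ∀ j ∈ v.support, i < j)

/-- `𝓕` is a strong `(p)`-filter: any family `(X_x⃗)` indexed by finite block sequences,
with each `⟨X_x⃗⟩ ∈ 𝓕`, has a diagonalization `X` with `X/x⃗ ⪯ X_x⃗` for all finite initial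
segments `x⃗` of `X`. -/
def StrongP (𝓕 : BlockFilter F) : Prop :=
  ∀ Xs : List (ℕ →₀ F) → ℕ → (ℕ →₀ F),
    (∀ l, IsBlockList l → IsBlock (Xs l) ∧ spanSet (Xs l) ∈ 𝓕.sets) →
    ∃ X : ℕ → (ℕ →₀ F), IsBlock X ∧ spanSet X ∈ 𝓕.sets ∧
      ∀ k : ℕ, PLE (fun m => X (m + k)) (Xs (List.ofFn fun i : Fin k => X i))

/-- The outcome of a strategy (for II) against a sequence of opposing moves:
the `k`-th value is the strategy applied to the first `k+1` opposing moves. -/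
def outcomeOf {α β : Type*} (st : List α → β) (Ys : ℕ → α) : ℕ → β :=
  fun k => st (List.ofFn fun i : Fin (k + 1) => Ys i)

/-- A legal move for player I in the Gowers game `G[X]`. -/
def LegalG (X Y : ℕ → (ℕ →₀ F)) : Prop := IsBlock Y ∧ PLE Y X

/-- A legal move for player I in the restricted Gowers game `G_𝓕[X]`. -/
def LegalGF (𝓕 : BlockFilter F) (X Y : ℕ → (ℕ →₀ F)) : Prop :=
  IsBlock Y ∧ PLE Y X ∧ spanSet Y ∈ 𝓕.sets

/-- `α` is a strategy for player II in a Gowers-type game whose legal moves for I are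
given by `legal`: against any sequence of legal I-moves, the outcome is a block
sequence whose `k`-th entry lies in the span of I's `k`-th move. -/
def IsStratII (legal : (ℕ → (ℕ →₀ F)) → Prop)
    (α : List (ℕ → (ℕ →₀ F)) → (ℕ →₀ F)) : Prop :=
  ∀ Ys : ℕ → ℕ → (ℕ →₀ F), (∀ k, legal (Ys k)) →
    IsBlock (outcomeOf α Ys) ∧ ∀ k, outcomeOf α Ys k ∈ spanSet (Ys k)

/-- `𝓕` is strategic. -/
def Strategic (𝓕 : BlockFilter F) : Prop :=
  ∀ X : ℕ → (ℕ →₀ F), IsBlock X → spanSet X ∈ 𝓕.sets →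
    ∀ α, IsStratII (LegalG X) α →
      ∃ Ys : ℕ → ℕ → (ℕ →₀ F), (∀ k, LegalG X (Ys k)) ∧
        spanSet (outcomeOf α Ys) ∈ 𝓕.sets

/-- `𝓕` is `+`-strategic. -/
def PlusStrategic (𝓕 : BlockFilter F) : Prop :=
  ∀ X : ℕ → (ℕ →₀ F), IsBlock X → spanSet X ∈ 𝓕.sets →
    ∀ α, IsStratII (LegalGF 𝓕 X) α →
      ∃ Ys : ℕ → ℕ → (ℕ →₀ F), (∀ k, LegalGF 𝓕 X (Ys k)) ∧
        spanSet (outcomeOf α Ys) ∈ 𝓕.sets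

/-- A legal finite position (list of II's moves so far) in a play where I follows `σ`. -/
def LegalPos (σ : List (ℕ →₀ F) → ℕ → (ℕ →₀ F)) (l : List (ℕ →₀ F)) : Prop :=
  IsBlockList l ∧ ∀ k, (h : k < l.length) → l.get ⟨k, h⟩ ∈ spanSet (σ (l.take k))

/-- `σ` is a strategy for player I in the restricted Gowers game `G_𝓕[X]`. -/
def IsStratIGF (𝓕 : BlockFilter F) (X : ℕ → (ℕ →₀ F))
    (σ : List (ℕ →₀ F) → ℕ → (ℕ →₀ F)) : Prop :=
  ∀ l, LegalPos σ l → LegalGF 𝓕 X (σ l)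

/-- `ys` is (the sequence of II's moves of) an infinite play against I's strategy `σ`
in a Gowers-type game; its outcome is `ys` itself. -/
def PlayAgainstI (σ : List (ℕ →₀ F) → ℕ → (ℕ →₀ F)) (ys : ℕ → (ℕ →₀ F)) : Prop :=
  IsBlock ys ∧ ∀ k, ys k ∈ spanSet (σ (List.ofFn fun i : Fin k => ys i))

/-- `ys` is an infinite play against I's strategy `σ` in the asymptotic game `F[X]`. -/
def PlayAgainstIAsymp (X : ℕ → (ℕ →₀ F)) (σ : List (ℕ →₀ F) → ℕ)
    (ys : ℕ → (ℕ →₀ F)) : Prop :=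
  IsBlock ys ∧ ∀ k, ys k ∈ spanSet X ∧
    ∀ i ∈ (ys k).support, σ (List.ofFn fun j : Fin k => ys j) < i

/-- `FIN`: nonempty finite subsets of `ℕ`. -/
abbrev FIN := {s : Finset ℕ // s.Nonempty}

/-- An infinite block sequence in `FIN`. -/
def IsBlockF (A : ℕ → Finset ℕ) : Prop :=
  (∀ n, (A n).Nonempty) ∧ ∀ n, ∀ i ∈ A n, ∀ j ∈ A (n + 1), i < j

/-- `⟨A⟩`: unions of finitely many (at least one) entries of `A`. -/
def finUnions (A : ℕ → Finset ℕ) : Set (Finset ℕ) :=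
  {b | ∃ G : Finset ℕ, G.Nonempty ∧ b = G.sup A}

/-- `⟨A/n⟩`: unions of finitely many entries of `A` contained in `(n, ∞)`. -/
def finUnionsAbove (A : ℕ → Finset ℕ) (n : ℕ) : Set (Finset ℕ) :=
  {b | ∃ G : Finset ℕ, G.Nonempty ∧ (∀ k ∈ G, ∀ i ∈ A k, n < i) ∧ b = G.sup A}

/-- `A ⪯ B` in `FIN`. -/
def PLEF (A B : ℕ → Finset ℕ) : Prop := finUnions A ⊆ finUnions B

/-- `A ⪯* B` in `FIN`. -/
def PLEsF (A B : ℕ → Finset ℕ) : Prop := ∃ n, finUnionsAbove A n ⊆ finUnions B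

/-- Lift a set of finite subsets of `ℕ` to a set of elements of `FIN`. -/
def liftFIN (S : Set (Finset ℕ)) : Set FIN := {a | (a : Finset ℕ) ∈ S}

/-- `U` is an ordered-union ultrafilter on `FIN`. -/
def OrderedUnion (U : Ultrafilter FIN) : Prop :=
  ∀ S ∈ U, ∃ A : ℕ → Finset ℕ, IsBlockF A ∧
    liftFIN (finUnions A) ∈ U ∧ liftFIN (finUnions A) ⊆ S

/-- `U` is stable. -/
def Stable (U : Ultrafilter FIN) : Prop :=
  ∀ As : ℕ → ℕ → Finset ℕ, (∀ n, IsBlockF (As n) ∧ liftFIN (finUnions (As n)) ∈ U) →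
    ∃ B : ℕ → Finset ℕ, IsBlockF B ∧ liftFIN (finUnions B) ∈ U ∧ ∀ n, PLEsF B (As n)

/-- `supp(X)`: the sequence of supports of the entries of `X`. -/
def suppSeq (X : ℕ → (ℕ →₀ F)) : ℕ → Finset ℕ := fun k => (X k).support

/-- `supp(𝓕)`: the collection of `A ⊆ FIN` containing `{supp v : v ∈ S}` for some `S ∈ 𝓕`. -/
def suppFilter (𝓕 : BlockFilter F) : Set (Set FIN) :=
  {A | ∃ S ∈ 𝓕.sets, ∀ a : FIN, (∃ v ∈ S, (a : Finset ℕ) = v.support) → a ∈ A}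

/-- A finite block sequence in `FIN`, as a list. -/
def IsBlockListF (l : List (Finset ℕ)) : Prop :=
  (∀ a ∈ l, a.Nonempty) ∧
    l.Chain' (fun a b : Finset ℕ => ∀ i ∈ a, ∀ j ∈ b, i < j)

end BlockPaper


namespace Stmt16Aux
open BlockPaper

/-- count of "huge" adjacent gaps in a list (meant: sorted support) -/
def cAdj (f : ℕ → ℕ) : List ℕ → ℕ
  | [] => 0
  | [_] => 0
  | a :: b :: r => (if f a < b then 1 else 0) + cAdj f (b :: r)

lemma cAdj_append (f : ℕ → ℕ) : ∀ (l₁ l₂ : List ℕ) (h₁ : l₁ ≠ []) (h₂ : l₂ ≠ []),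
    cAdj f (l₁ ++ l₂) = cAdj f l₁ + cAdj f l₂ +
      (if f (l₁.getLast h₁) < l₂.head h₂ then 1 else 0)
  | [], _, h₁, _ => absurd rfl h₁
  | [a], l₂, _, h₂ => by
    cases l₂ with
    | nil => exact absurd rfl h₂
    | cons b r =>
      simp only [List.cons_append, List.nil_append, List.getLast_singleton, List.head_cons]
      show cAdj f (a :: b :: r) = _
      rw [show cAdj f (a :: b :: r) = (if f a < b then 1 else 0) + cAdj f (b :: r) from rfl]
      have : cAdj f [a] = 0 := rfl
      simp [this, add_comm]
      congr
  | a :: b :: r, l₂, _, h₂ => by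
    have ih := cAdj_append f (b :: r) l₂ (by simp) h₂
    have h3 : (a :: b :: r) ++ l₂ = a :: b :: (r ++ l₂) := by simp
    rw [h3]
    show (if f a < b then 1 else 0) + cAdj f (b :: (r ++ l₂)) = _
    have h4 : (b :: r) ++ l₂ = b :: (r ++ l₂) := by simp
    rw [h4] at ih
    rw [ih]
    rw [show cAdj f (a :: b :: r) = (if f a < b then 1 else 0) + cAdj f (b :: r) from rfl]
    rw [List.getLast_cons (by simp : (b :: r) ≠ [])]
    omega

lemma sort_union {s t : Finset ℕ} (h : ∀ i ∈ s, ∀ j ∈ t, i < j) :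
    (s ∪ t).sort (· ≤ ·) = s.sort (· ≤ ·) ++ t.sort (· ≤ ·) := by
  have hd : Disjoint s t := by
    rw [Finset.disjoint_left]
    intro a ha hat
    exact lt_irrefl a (h a ha a hat)
  refine (fun h1 h2 => List.Perm.eq_of_pairwise' (r := (· ≤ ·)) (Finset.pairwise_sort _ _) h2 h1) ?_ ?_
  · apply Multiset.coe_eq_coe.mp
    have e2 : ((s.sort (· ≤ ·) ++ t.sort (· ≤ ·) : List ℕ) : Multiset ℕ)
        = (s.sort (· ≤ ·) : Multiset ℕ) + (t.sort (· ≤ ·) : Multiset ℕ) := by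
      exact Multiset.coe_add _ _
    rw [Finset.sort_eq, e2, Finset.sort_eq, Finset.sort_eq]
    have e3 : s ∪ t = s.disjUnion t hd := (Finset.disjUnion_eq_union s t hd).symm
    rw [e3]
    rfl
  · rw [List.pairwise_append]
    refine ⟨Finset.pairwise_sort _ _, Finset.pairwise_sort _ _, ?_⟩
    intro x hx y hy
    exact le_of_lt (h x ((Finset.mem_sort _).mp hx) y ((Finset.mem_sort _).mp hy))

lemma sort_ne_nil {s : Finset ℕ} (hs : s.Nonempty) : s.sort (· ≤ ·) ≠ [] := by
  obtain ⟨a, ha⟩ := hs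
  exact List.ne_nil_of_mem ((Finset.mem_sort _).mpr ha)

lemma sort_head {s : Finset ℕ} (hs : s.Nonempty) :
    (s.sort (· ≤ ·)).head (sort_ne_nil hs) = s.min' hs := by
  rw [List.head_eq_getElem_zero]
  exact Finset.sorted_zero_eq_min'_aux _ _ _

lemma sort_getLast {s : Finset ℕ} (hs : s.Nonempty) :
    (s.sort (· ≤ ·)).getLast (sort_ne_nil hs) = s.max' hs := by
  rw [List.getLast_eq_getElem]
  exact Finset.sorted_last_eq_max'_aux _
    (Nat.sub_lt (List.length_pos_iff.mpr (sort_ne_nil hs)) Nat.one_pos) _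


variable {F : Type} [Field F]

/-- number of huge gaps (w.r.t. `f`) in the support of `v` -/
noncomputable def hCnt (f : ℕ → ℕ) (v : ℕ →₀ F) : ℕ := cAdj f (v.support.sort (· ≤ ·))

lemma supp_ne {v : ℕ →₀ F} (hv : v ≠ 0) : v.support.Nonempty :=
  Finsupp.support_nonempty_iff.mpr hv

lemma hCnt_congr (f : ℕ → ℕ) {v w : ℕ →₀ F} (h : v.support = w.support) :
    hCnt f v = hCnt f w := by
  unfold hCnt; rw [h]

lemma hCnt_add {u w : ℕ →₀ F} (hu : u ≠ 0) (hw : w ≠ 0)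
    (h : ∀ i ∈ u.support, ∀ j ∈ w.support, i < j) (f : ℕ → ℕ) :
    hCnt f (u + w) = hCnt f u + hCnt f w +
      (if f (u.support.max' (supp_ne hu)) < w.support.min' (supp_ne hw) then 1 else 0) := by
  have hd : Disjoint u.support w.support := by
    rw [Finset.disjoint_left]
    intro a ha hat
    exact lt_irrefl a (h a ha a hat)
  have hs : (u + w).support = u.support ∪ w.support := Finsupp.support_add_eq hd
  unfold hCnt
  rw [hs, sort_union h,
    cAdj_append f _ _ (sort_ne_nil (supp_ne hu)) (sort_ne_nil (supp_ne hw)),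
    sort_getLast (supp_ne hu), sort_head (supp_ne hw)]

section Block
open BlockPaper

lemma isBlock_lt {X : ℕ → ℕ →₀ F} (hX : IsBlock X) :
    ∀ {m n : ℕ}, m < n → ∀ i ∈ (X m).support, ∀ j ∈ (X n).support, i < j := by
  intro m n h
  induction n with
  | zero => omega
  | succ n ih =>
    rcases Nat.lt_succ_iff_lt_or_eq.mp h with h' | h'
    · intro i hi j hj
      obtain ⟨k, hk⟩ := supp_ne (hX.1 n)
      exact lt_trans (ih h' i hi k hk) (hX.2 n k hk j hj)
    · subst h'
      exact hX.2 m

lemma isBlock_supp_disjoint {X : ℕ → ℕ →₀ F} (hX : IsBlock X) {m n : ℕ} (h : m ≠ n) :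
    Disjoint (X m).support (X n).support := by
  rw [Finset.disjoint_left]
  intro a ha hat
  rcases Nat.lt_or_ge m n with h' | h'
  · exact lt_irrefl a (isBlock_lt hX h' a ha a hat)
  · exact lt_irrefl a (isBlock_lt hX (by omega) a hat a ha)

lemma isBlock_maxmono {X : ℕ → ℕ →₀ F} (hX : IsBlock X) {m n : ℕ} (h : m ≤ n) :
    (X m).support.max' (supp_ne (hX.1 m)) ≤ (X n).support.max' (supp_ne (hX.1 n)) := by
  rcases Nat.lt_or_ge m n with h' | h'
  · exact le_of_lt (isBlock_lt hX h' _ (Finset.max'_mem _ _) _ (Finset.max'_mem _ _))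
  · have : m = n := by omega
    subst this; rfl

lemma supp_sum {z : ℕ → ℕ →₀ F} (hz : IsBlock z) (c : ℕ → F) (s : Finset ℕ)
    (hc : ∀ t ∈ s, c t ≠ 0) :
    (∑ t ∈ s, c t • z t).support = s.biUnion fun t => (z t).support := by
  induction s using Finset.induction_on_max with
  | empty => simp
  | insert a s ha ih =>
    have hans : a ∉ s := fun hmem => lt_irrefl a (ha a hmem)
    rw [Finset.sum_insert hans]
    have hs' := ih (fun t ht => hc t (Finset.mem_insert_of_mem ht))
    have hca : c a ≠ 0 := hc a (Finset.mem_insert_self a s)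
    have hdisj : Disjoint (c a • z a).support (∑ t ∈ s, c t • z t).support := by
      rw [Finsupp.support_smul_eq hca, hs', Finset.disjoint_right]
      intro i hi hia
      obtain ⟨t, ht, hit⟩ := Finset.mem_biUnion.mp hi
      exact lt_irrefl i (isBlock_lt hz (ha t ht) i hit i hia)
    rw [Finsupp.support_add_eq hdisj, Finsupp.support_smul_eq hca, hs',
      Finset.biUnion_insert]

lemma odd_sum {z : ℕ → ℕ →₀ F} (hz : IsBlock z) (f : ℕ → ℕ) (hmono : Monotone f)
    (hodd : ∀ t, Odd (hCnt f (z t)))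
    (hcr : ∀ t, f ((z t).support.max' (supp_ne (hz.1 t)))
      < (z (t + 1)).support.min' (supp_ne (hz.1 (t + 1))))
    (c : ℕ → F) (s : Finset ℕ) (hne : s.Nonempty) (hc : ∀ t ∈ s, c t ≠ 0) :
    Odd (hCnt f (∑ t ∈ s, c t • z t)) := by
  have hcross : ∀ t t' : ℕ, t < t' →
      f ((z t).support.max' (supp_ne (hz.1 t)))
        < (z t').support.min' (supp_ne (hz.1 t')) := by
    intro t t' htt
    have h1 : t ≤ t' - 1 := by omega
    have h2 := hcr (t' - 1)
    rw [show t' - 1 + 1 = t' from by omega] at h2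
    exact lt_of_le_of_lt (hmono (isBlock_maxmono hz h1)) h2
  induction s using Finset.induction_on_max with
  | empty => exact absurd hne (by simp)
  | insert a s ha ih =>
    have hans : a ∉ s := fun hmem => lt_irrefl a (ha a hmem)
    have hca : c a ≠ 0 := hc a (Finset.mem_insert_self a s)
    rcases s.eq_empty_or_nonempty with rfl | hs
    · rw [Finset.sum_insert (by simp), Finset.sum_empty, add_zero]
      have : hCnt f (c a • z a) = hCnt f (z a) :=
        hCnt_congr f (Finsupp.support_smul_eq hca)
      rw [this]; exact hodd a
    · have hc' : ∀ t ∈ s, c t ≠ 0 := fun t ht => hc t (Finset.mem_insert_of_mem ht)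
      have hodd_u := ih hs hc'
      set u := ∑ t ∈ s, c t • z t with hu_def
      have hsupp_u : u.support = s.biUnion fun t => (z t).support := supp_sum hz c s hc'
      have hu0 : u ≠ 0 := by
        intro h0
        obtain ⟨t, ht⟩ := hs
        obtain ⟨i, hi⟩ := supp_ne (hz.1 t)
        have : i ∈ u.support := by
          rw [hsupp_u]; exact Finset.mem_biUnion.mpr ⟨t, ht, hi⟩
        rw [h0] at this; simp at this
      have hw0 : c a • z a ≠ 0 := by
        intro h0
        have := Finsupp.support_smul_eq hca (g := z a)
        rw [h0] at this
        exact (supp_ne (hz.1 a)).ne_empty (by simpa using this.symm)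
      have hord : ∀ i ∈ u.support, ∀ j ∈ (c a • z a).support, i < j := by
        intro i hi j hj
        rw [hsupp_u] at hi
        rw [Finsupp.support_smul_eq hca] at hj
        obtain ⟨t, ht, hit⟩ := Finset.mem_biUnion.mp hi
        exact isBlock_lt hz (ha t ht) i hit j hj
      rw [Finset.sum_insert hans, add_comm, hCnt_add hu0 hw0 hord f]
      have hcond : f (u.support.max' (supp_ne hu0))
          < (c a • z a).support.min' (supp_ne hw0) := by
        obtain ⟨M, hM⟩ : ∃ M, M = u.support.max' (supp_ne hu0) := ⟨_, rfl⟩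
        have hmax_mem : M ∈ u.support := hM ▸ Finset.max'_mem u.support (supp_ne hu0)
        rw [hsupp_u] at hmax_mem
        obtain ⟨t, ht, hmt⟩ := Finset.mem_biUnion.mp hmax_mem
        have h1 : M ≤ (z t).support.max' (supp_ne (hz.1 t)) :=
          Finset.le_max' _ _ hmt
        have h2 := hcross t a (ha t ht)
        obtain ⟨N, hN⟩ : ∃ N, N = (c a • z a).support.min' (supp_ne hw0) := ⟨_, rfl⟩
        have h5 : N ∈ (c a • z a).support := hN ▸ Finset.min'_mem _ (supp_ne hw0)
        rw [Finsupp.support_smul_eq hca] at h5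
        have h6 : (z a).support.min' (supp_ne (hz.1 a)) ≤ N := Finset.min'_le _ _ h5
        rw [← hM, ← hN]
        exact lt_of_le_of_lt (hmono h1) (lt_of_lt_of_le h2 h6)
      rw [if_pos hcond]
      obtain ⟨p, hp⟩ := hodd_u
      obtain ⟨q, hq⟩ := hodd a
      have : hCnt f (c a • z a) = hCnt f (z a) :=
        hCnt_congr f (Finsupp.support_smul_eq hca)
      rw [this, hp, hq]
      exact ⟨p + q + 1, by ring⟩

lemma mem_tail_span {T : ℕ → ℕ →₀ F} (hT : IsBlock T) {v : ℕ →₀ F} {n : ℕ}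
    (hv : v ∈ Submodule.span F (Set.range T)) (hs : ∀ i ∈ v.support, n < i) :
    v ∈ Submodule.span F {x : ℕ →₀ F | (∃ k, T k = x) ∧ ∀ i ∈ x.support, n < i} := by
  obtain ⟨c, hc⟩ := Finsupp.mem_span_range_iff_exists_finsupp.mp hv
  have hcs : c.sum (fun i a => a • T i) = ∑ t ∈ c.support, c t • T t := rfl
  rw [← hc, hcs]
  refine Submodule.sum_mem _ fun t ht => Submodule.smul_mem _ _ (Submodule.subset_span ⟨⟨t, rfl⟩, ?_⟩)
  intro i hi
  apply hs
  rw [← hc, hcs, supp_sum hT c c.support (fun _ h => Finsupp.mem_support_iff.mp h)]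
  exact Finset.mem_biUnion.mpr ⟨t, ht, hi⟩

lemma isBlock_li {z : ℕ → ℕ →₀ F} (hz : IsBlock z) : LinearIndependent F z := by
  rw [linearIndependent_iff]
  intro l hl
  by_contra hne0
  have hne : l.support.Nonempty := Finsupp.support_nonempty_iff.mpr hne0
  rw [Finsupp.linearCombination_apply] at hl
  have hcs : l.sum (fun i a => a • z i) = ∑ t ∈ l.support, l t • z t := rfl
  rw [hcs] at hl
  obtain ⟨t, ht⟩ := hne
  obtain ⟨i, hi⟩ := supp_ne (hz.1 t)
  have : i ∈ (∑ t ∈ l.support, l t • z t).support := by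
    rw [supp_sum hz l l.support (fun _ h => Finsupp.mem_support_iff.mp h)]
    exact Finset.mem_biUnion.mpr ⟨t, ht, hi⟩
  rw [hl] at this
  simp at this

lemma span_inf {z : ℕ → ℕ →₀ F} (hz : IsBlock z) :
    ¬ Module.Finite F (Submodule.span F (Set.range z)) := by
  intro hfin
  have li := isBlock_li hz
  have hfg : (Submodule.span F (Set.range z)).FG := Module.Finite.iff_fg.mp hfin
  obtain ⟨S, hS⟩ := hfg
  haveI : Finite (↑(↑S : Set (ℕ →₀ F))) := Set.Finite.to_subtype (S.finite_toSet)
  have hle : Set.range z ≤ Submodule.span F (↑S : Set (ℕ →₀ F)) := by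
    rw [hS]; exact Submodule.subset_span
  haveI := li.finite_of_le_span_finite z (↑S : Set (ℕ →₀ F)) hle
  exact not_finite ℕ


lemma max'_eq_sup_id (s : Finset ℕ) (h : s.Nonempty) : s.max' h = s.sup id := by
  rw [Finset.max'_eq_sup']
  exact Finset.sup'_eq_sup h id

lemma isBlock_min_ge {Z : ℕ → ℕ →₀ F} (hZ : IsBlock Z) (n : ℕ) :
    n ≤ (Z n).support.min' (supp_ne (hZ.1 n)) := by
  induction n with
  | zero => omega
  | succ n ih =>
    have h1 := hZ.2 n ((Z n).support.min' (supp_ne (hZ.1 n))) (Finset.min'_mem _ _)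
      ((Z (n + 1)).support.min' (supp_ne (hZ.1 (n + 1)))) (Finset.min'_mem _ _)
    omega

lemma ne_zero_of_supp {v : ℕ →₀ F} (h : v.support.Nonempty) : v ≠ 0 :=
  Finsupp.support_nonempty_iff.mp h

lemma dense_odd (𝓕 : BlockFilter F) (f : ℕ → ℕ) (hmono : Monotone f) (hid : ∀ n, n ≤ f n) :
    FDense 𝓕 {v : ℕ →₀ F | v ≠ 0 ∧ (∀ i ∈ v.support, f 0 < i) ∧ Odd (hCnt f v)} := by
  intro Z hZ _
  have rich : ∀ B : ℕ, ∃ w : ℕ →₀ F, w ∈ Submodule.span F (Set.range Z) ∧ w ≠ 0 ∧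
      Odd (hCnt f w) ∧ ∀ i ∈ w.support, B < i := by
    intro B
    by_cases hI : ∀ N : ℕ, ∃ n, N ≤ n ∧ Odd (hCnt f (Z n))
    · obtain ⟨n, hn, hodd⟩ := hI (B + 1)
      refine ⟨Z n, Submodule.subset_span ⟨n, rfl⟩, hZ.1 n, hodd, ?_⟩
      intro i hi
      have h1 := Finset.min'_le _ _ hi
      have h2 := isBlock_min_ge hZ n
      omega
    · push_neg at hI
      obtain ⟨N, hN⟩ := hI
      set a := max N (B + 1) with ha_def
      set b := max N (f ((Z a).support.max' (supp_ne (hZ.1 a))) + 1) with hb_def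
      have hminb : f ((Z a).support.max' (supp_ne (hZ.1 a)))
          < (Z b).support.min' (supp_ne (hZ.1 b)) := by
        have h1 := isBlock_min_ge hZ b
        omega
      have hord : ∀ i ∈ (Z a).support, ∀ j ∈ (Z b).support, i < j := by
        intro i hi j hj
        have h1 := Finset.le_max' _ _ hi
        have h2 := Finset.min'_le _ _ hj
        have h3 := hid ((Z a).support.max' (supp_ne (hZ.1 a)))
        omega
      have hdisj : Disjoint (Z a).support (Z b).support := by
        rw [Finset.disjoint_left]
        intro i hi hib
        exact lt_irrefl i (hord i hi i hib)
      have hsupp : (Z a + Z b).support = (Z a).support ∪ (Z b).support :=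
        Finsupp.support_add_eq hdisj
      have hw0 : Z a + Z b ≠ 0 := by
        apply ne_zero_of_supp
        rw [hsupp]
        obtain ⟨i, hi⟩ := supp_ne (hZ.1 a)
        exact ⟨i, Finset.mem_union_left _ hi⟩
      refine ⟨Z a + Z b,
        Submodule.add_mem _ (Submodule.subset_span ⟨a, rfl⟩) (Submodule.subset_span ⟨b, rfl⟩),
        hw0, ?_, ?_⟩
      · rw [hCnt_add (hZ.1 a) (hZ.1 b) hord f, if_pos hminb]
        have he1 : ¬ Odd (hCnt f (Z a)) := hN a (le_max_left _ _)
        have he2 : ¬ Odd (hCnt f (Z b)) := hN b (le_max_left _ _)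
        rw [Nat.odd_iff] at *
        omega
      · intro i hi
        rw [hsupp] at hi
        rcases Finset.mem_union.mp hi with hia | hib
        · have h1 := Finset.min'_le _ _ hia
          have h2 := isBlock_min_ge hZ a
          omega
        · have h1 := Finset.min'_le _ _ hib
          have h3 := hminb
          have h4 := hid ((Z a).support.max' (supp_ne (hZ.1 a)))
          have h5 := isBlock_min_ge hZ a
          have h6 : (Z a).support.min' (supp_ne (hZ.1 a))
              ≤ (Z a).support.max' (supp_ne (hZ.1 a)) :=
            Finset.min'_le _ _ (Finset.max'_mem _ _)
          omega
  choose W hW using rich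
  set g : ℕ → ℕ →₀ F :=
    fun n => Nat.rec (W (f 0)) (fun _ prev => W (f (prev.support.sup id))) n with hg_def
  have hg0 : g 0 = W (f 0) := rfl
  have hgs : ∀ n, g (n + 1) = W (f ((g n).support.sup id)) := fun n => rfl
  have hgW : ∀ n, ∃ B, f 0 ≤ B ∧ g n = W B := by
    intro n
    cases n with
    | zero => exact ⟨f 0, le_refl _, hg0⟩
    | succ n => exact ⟨f ((g n).support.sup id), hmono (Nat.zero_le _), hgs n⟩
  have hg_span : ∀ n, g n ∈ Submodule.span F (Set.range Z) := by
    intro n; obtain ⟨B, _, hB⟩ := hgW n; rw [hB]; exact (hW B).1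
  have hg_ne : ∀ n, g n ≠ 0 := by
    intro n; obtain ⟨B, _, hB⟩ := hgW n; rw [hB]; exact (hW B).2.1
  have hg_odd : ∀ n, Odd (hCnt f (g n)) := by
    intro n; obtain ⟨B, _, hB⟩ := hgW n; rw [hB]; exact (hW B).2.2.1
  have hg_f0 : ∀ n, ∀ i ∈ (g n).support, f 0 < i := by
    intro n i hi
    obtain ⟨B, hB0, hB⟩ := hgW n
    rw [hB] at hi
    have := (hW B).2.2.2 i hi
    omega
  have hg_step : ∀ n, ∀ j ∈ (g (n + 1)).support, f ((g n).support.sup id) < j := by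
    intro n j hj
    rw [hgs n] at hj
    exact (hW _).2.2.2 j hj
  have hg_blk : IsBlock g := by
    refine ⟨hg_ne, ?_⟩
    intro n i hi j hj
    have h1 : i ≤ (g n).support.sup id := Finset.le_sup (f := id) hi
    have h2 := hid ((g n).support.sup id)
    have h3 := hg_step n j hj
    omega
  have hg_cr : ∀ t, f ((g t).support.max' (supp_ne (hg_blk.1 t)))
      < (g (t + 1)).support.min' (supp_ne (hg_blk.1 (t + 1))) := by
    intro t
    rw [max'_eq_sup_id]
    exact hg_step t _ (Finset.min'_mem _ _)
  refine ⟨Submodule.span F (Set.range g), span_inf hg_blk, ?_⟩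
  rintro v ⟨hv1, hv2⟩
  have hv0 : v ≠ 0 := hv2
  obtain ⟨c, hc⟩ := Finsupp.mem_span_range_iff_exists_finsupp.mp hv1
  have hcs : c.sum (fun i a => a • g i) = ∑ t ∈ c.support, c t • g t := rfl
  have hcne : c.support.Nonempty := by
    rcases c.support.eq_empty_or_nonempty with he | hne
    · exfalso
      apply hv0
      rw [← hc, hcs, he, Finset.sum_empty]
    · exact hne
  have hvs : v.support = c.support.biUnion fun t => (g t).support := by
    rw [← hc, hcs]
    exact supp_sum hg_blk c c.support (fun _ h => Finsupp.mem_support_iff.mp h)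
  constructor
  · exact ⟨hv0, by
      rw [← hc, hcs]
      exact Submodule.sum_mem _ fun t _ => Submodule.smul_mem _ _ (hg_span t)⟩
  · refine ⟨hv0, ?_, ?_⟩
    · intro i hi
      rw [hvs] at hi
      obtain ⟨t, _, hit⟩ := Finset.mem_biUnion.mp hi
      exact hg_f0 t i hit
    · rw [← hc, hcs]
      exact odd_sum hg_blk f hmono hg_odd hg_cr c c.support hcne
        (fun _ h => Finsupp.mem_support_iff.mp h)


lemma blockList_pairwise {l : List (ℕ →₀ F)} (h : IsBlockList l) :
    l.Pairwise fun u v : ℕ →₀ F => ∀ i ∈ u.support, ∀ j ∈ v.support, i < j := by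
  obtain ⟨h0, hch⟩ := h
  induction l with
  | nil => exact List.Pairwise.nil
  | cons u r ih =>
    have h0r : ∀ v ∈ r, v ≠ 0 := fun v hv => h0 v (List.mem_cons_of_mem u hv)
    have hchr : r.Chain' _ := hch.tail
    have pr := ih h0r hchr
    refine List.pairwise_cons.mpr ⟨?_, pr⟩
    intro w hw
    induction r with
    | nil => simp at hw
    | cons v r' ih2 =>
      have huv : ∀ i ∈ u.support, ∀ j ∈ v.support, i < j :=
        (List.isChain_cons_cons.mp hch).1
      rcases List.mem_cons.mp hw with rfl | hw'
      · exact huv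
      · have hvw : ∀ i ∈ v.support, ∀ j ∈ w.support, i < j :=
          (List.pairwise_cons.mp pr).1 w hw'
        intro i hi j hj
        obtain ⟨m, hm⟩ := supp_ne (h0 v (List.mem_cons_of_mem u List.mem_cons_self))
        exact lt_trans (huv i hi m hm) (hvw m hm j hj)

lemma blockList_length {l : List (ℕ →₀ F)} (h : IsBlockList l) {b : ℕ}
    (hb : ∀ v ∈ l, ∀ i ∈ v.support, i ≤ b) : l.length ≤ b + 1 := by
  classical
  have hp := blockList_pairwise h
  set m : (ℕ →₀ F) → ℕ := fun v => v.support.sup id with hm_def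
  have hmono : (l.map m).Pairwise (· < ·) := by
    rw [List.pairwise_map]
    refine hp.imp_of_mem ?_
    intro u v hu hv huv
    have hu0 := supp_ne (h.1 u hu)
    have hv0 := supp_ne (h.1 v hv)
    have h1 : m u ∈ u.support := by
      rw [hm_def]
      simp only
      rw [← max'_eq_sup_id _ hu0]
      exact Finset.max'_mem _ _
    have h2 : m v ∈ v.support := by
      rw [hm_def]
      simp only
      rw [← max'_eq_sup_id _ hv0]
      exact Finset.max'_mem _ _
    exact huv _ h1 _ h2
  have hnd : (l.map m).Nodup := hmono.imp Nat.ne_of_lt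
  have hsub : (l.map m).toFinset ⊆ Finset.range (b + 1) := by
    intro x hx
    rw [List.mem_toFinset] at hx
    obtain ⟨v, hv, rfl⟩ := List.mem_map.mp hx
    have hv0 := supp_ne (h.1 v hv)
    have h1 : m v ∈ v.support := by
      rw [hm_def]
      simp only
      rw [← max'_eq_sup_id _ hv0]
      exact Finset.max'_mem _ _
    rw [Finset.mem_range]
    have := hb v hv _ h1
    omega
  have h3 := Finset.card_le_card hsub
  rw [List.toFinset_card_of_nodup hnd, Finset.card_range, List.length_map] at h3
  exact h3

lemma finite_vectors [Finite F] (b : ℕ) :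
    {v : ℕ →₀ F | ∀ i ∈ v.support, i ≤ b}.Finite := by
  classical
  have : Finite (Fin (b + 1) → F) := by infer_instance
  apply Set.Finite.of_finite_image (f := fun v : ℕ →₀ F => fun i : Fin (b + 1) => v i)
  · exact Set.toFinite _
  · intro v hv w hw hvw
    ext i
    by_cases hib : i ≤ b
    · have := congrFun hvw ⟨i, by omega⟩
      simpa using this
    · have hv0 : v i = 0 := by
        by_contra h0
        exact hib (hv i (Finsupp.mem_support_iff.mpr h0))
      have hw0 : w i = 0 := by
        by_contra h0
        exact hib (hw i (Finsupp.mem_support_iff.mpr h0))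
      rw [hv0, hw0]

lemma finite_lists {α : Type} {s : Set α} (hs : s.Finite) :
    ∀ n : ℕ, {l : List α | l.length ≤ n ∧ ∀ x ∈ l, x ∈ s}.Finite := by
  intro n
  induction n with
  | zero =>
    apply Set.Finite.subset (Set.finite_singleton ([] : List α))
    intro l hl
    have := hl.1
    simp only [Set.mem_singleton_iff]
    exact List.length_eq_zero_iff.mp (by omega)
  | succ n ih =>
    apply Set.Finite.subset
      (Set.Finite.insert [] (Set.Finite.image2 List.cons hs ih))
    intro l hl
    cases l with
    | nil => exact Set.mem_insert _ _
    | cons x r =>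
      apply Set.mem_insert_of_mem
      refine Set.mem_image2_of_mem (hl.2 x List.mem_cons_self) ⟨?_, ?_⟩
      · have := hl.1; simp at this ⊢; omega
      · exact fun y hy => hl.2 y (List.mem_cons_of_mem x hy)

lemma finite_blockLists [Finite F] (b : ℕ) :
    {l : List (ℕ →₀ F) | IsBlockList l ∧ ∀ v ∈ l, ∀ i ∈ v.support, i ≤ b}.Finite := by
  apply Set.Finite.subset (finite_lists (finite_vectors (F := F) b) (b + 1))
  intro l hl
  exact ⟨blockList_length hl.1 hl.2, fun x hx i hi => hl.2 x hx i hi⟩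


lemma isBlockList_ofFn {X : ℕ → ℕ →₀ F} (hX : IsBlock X) (k : ℕ) :
    IsBlockList (List.ofFn fun i : Fin k => X (i : ℕ)) := by
  constructor
  · intro v hv
    rw [List.mem_ofFn] at hv
    obtain ⟨i, rfl⟩ := hv
    exact hX.1 _
  · show List.IsChain _ _
    rw [List.isChain_iff_getElem]
    intro i hlen
    simp only [List.getElem_ofFn]
    exact hX.2 i

end Block
end Stmt16Aux

open Stmt16Aux

open BlockPaper in
/-- If the field `F` is finite, every `(p⁺)`-filter on `E` is a strong `(p⁺)`-filter. -/
theorem stmt16 {F : Type} [Field F] [Finite F] (𝓕 : BlockFilter F)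
    (h : PPlus 𝓕) : Full 𝓕 ∧ StrongP 𝓕 := by
  classical
  obtain ⟨hFull, hP⟩ := h
  refine ⟨hFull, ?_⟩
  intro Xs hXs
  haveI hcnt : Countable {l : List (ℕ →₀ F) // IsBlockList l} := by
    haveI : Countable (ℕ →₀ F) := by infer_instance
    infer_instance
  haveI hne : Nonempty {l : List (ℕ →₀ F) // IsBlockList l} :=
    ⟨⟨[], ⟨by simp, List.isChain_nil⟩⟩⟩
  obtain ⟨e, he⟩ := exists_surjective_nat {l : List (ℕ →₀ F) // IsBlockList l}
  obtain ⟨T, hTb, hTm, hTle⟩ := hP (fun n => Xs (e n).1)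
    (fun n => hXs (e n).1 (e n).2)
  have hPLEs : ∀ l : List (ℕ →₀ F), IsBlockList l →
      ∃ n, tailSpanSet T n ⊆ spanSet (Xs l) := by
    intro l hl
    obtain ⟨n, hn⟩ := he ⟨l, hl⟩
    obtain ⟨ν, hν⟩ := hTle n
    refine ⟨ν, ?_⟩
    rw [← show (e n).1 = l from congrArg Subtype.val hn]
    exact hν
  choose ν hν using hPLEs
  obtain ⟨μ, hμ⟩ : ∃ μ : List (ℕ →₀ F) → ℕ,
      ∀ (l) (hl : IsBlockList l), tailSpanSet T (μ l) ⊆ spanSet (Xs l) := by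
    refine ⟨fun l => if hl : IsBlockList l then ν l hl else 0, ?_⟩
    intro l hl
    show tailSpanSet T (if hl : IsBlockList l then ν l hl else 0) ⊆ _
    rw [dif_pos hl]
    exact hν l hl
  obtain ⟨f, hid, hmono, hμf⟩ : ∃ f : ℕ → ℕ, (∀ n, n ≤ f n) ∧ Monotone f ∧
      ∀ (l) (hl : IsBlockList l) (b : ℕ),
        (∀ v ∈ l, ∀ i ∈ v.support, i ≤ b) → μ l ≤ f b := by
    refine ⟨fun b => max b ((finite_blockLists (F := F) b).toFinset.sup μ),
      fun n => le_max_left _ _, ?_, ?_⟩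
    · intro b b' hbb
      apply max_le_max hbb
      apply Finset.sup_mono
      rw [Set.Finite.toFinset_subset_toFinset]
      intro l hl
      exact ⟨hl.1, fun v hv i hi => le_trans (hl.2 v hv i hi) hbb⟩
    · intro l hl b hb
      refine le_trans (Finset.le_sup ?_) (le_max_right _ _)
      rw [Set.Finite.mem_toFinset]
      exact ⟨hl, hb⟩
  have hD0 : (0 : ℕ →₀ F) ∉ {v : ℕ →₀ F | v ≠ 0 ∧ (∀ i ∈ v.support, f 0 < i) ∧
      Odd (hCnt f v)} := fun h0 => h0.1 rfl
  have hDF : {v : ℕ →₀ F | v ≠ 0 ∧ (∀ i ∈ v.support, f 0 < i) ∧ Odd (hCnt f v)}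
      ∈ 𝓕.sets := by
    have := hFull _ (dense_odd 𝓕 f hmono hid)
    rwa [Set.diff_singleton_eq_self hD0] at this
  obtain ⟨X, hXb, hXm, hXsub⟩ := 𝓕.blockBase _ (𝓕.inter _ hDF _ hTm)
  have hXmem : ∀ j, X j ∈ spanSet X :=
    fun j => ⟨hXb.1 j, Submodule.subset_span ⟨j, rfl⟩⟩
  have hXD : ∀ j, (X j ≠ 0 ∧ (∀ i ∈ (X j).support, f 0 < i) ∧ Odd (hCnt f (X j))) :=
    fun j => (hXsub (hXmem j)).1
  have hXT : ∀ j, X j ∈ Submodule.span F (Set.range T) :=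
    fun j => (hXsub (hXmem j)).2.2
  have hcrX : ∀ j, f ((X j).support.max' (supp_ne (hXb.1 j)))
      < (X (j + 1)).support.min' (supp_ne (hXb.1 (j + 1))) := by
    intro j
    have hord := hXb.2 j
    have hdisj : Disjoint (X j).support (X (j + 1)).support := by
      rw [Finset.disjoint_left]
      intro a ha hb
      exact lt_irrefl a (hord a ha a hb)
    have hsum0 : X j + X (j + 1) ≠ 0 := by
      apply ne_zero_of_supp
      rw [Finsupp.support_add_eq hdisj]
      obtain ⟨i, hi⟩ := supp_ne (hXb.1 j)
      exact ⟨i, Finset.mem_union_left _ hi⟩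
    have hsumX : X j + X (j + 1) ∈ spanSet X :=
      ⟨hsum0, Submodule.add_mem _ (Submodule.subset_span ⟨j, rfl⟩)
        (Submodule.subset_span ⟨j + 1, rfl⟩)⟩
    have h3 := (hXsub hsumX).1.2.2
    have h1 := (hXD j).2.2
    have h2 := (hXD (j + 1)).2.2
    rw [hCnt_add (hXb.1 j) (hXb.1 (j + 1)) hord f] at h3
    by_contra hcon
    rw [if_neg hcon, add_zero] at h3
    rw [Nat.odd_iff] at h1 h2 h3
    omega
  refine ⟨X, hXb, hXm, ?_⟩
  intro k
  have hlB : IsBlockList (List.ofFn fun i : Fin k => X (i : ℕ)) := isBlockList_ofFn hXb k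
  have hbound : ∀ m, k ≤ m → ∀ i ∈ (X m).support,
      μ (List.ofFn fun i : Fin k => X (i : ℕ)) < i := by
    intro m hkm i hi
    rcases Nat.eq_zero_or_pos k with rfl | hk
    · have hμ0 : μ (List.ofFn fun i : Fin 0 => X (i : ℕ)) ≤ f 0 :=
        hμf _ hlB 0 (by simp)
      have := (hXD m).2.1 i hi
      omega
    · have hsupb : ∀ v ∈ (List.ofFn fun i : Fin k => X (i : ℕ)), ∀ i' ∈ v.support,
          i' ≤ (X (k - 1)).support.max' (supp_ne (hXb.1 (k - 1))) := by
        intro v hv i' hi'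
        rw [List.mem_ofFn] at hv
        obtain ⟨j, rfl⟩ := hv
        have h1 : i' ≤ (X (j : ℕ)).support.max' (supp_ne (hXb.1 (j : ℕ))) :=
          Finset.le_max' _ _ hi'
        have h2 : (X (j : ℕ)).support.max' (supp_ne (hXb.1 (j : ℕ)))
            ≤ (X (k - 1)).support.max' (supp_ne (hXb.1 (k - 1))) :=
          isBlock_maxmono hXb (by omega)
        omega
      have hμb := hμf _ hlB _ hsupb
      have hmin_i : (X m).support.min' (supp_ne (hXb.1 m)) ≤ i := Finset.min'_le _ _ hi
      have hstep : f ((X (m - 1)).support.max' (supp_ne (hXb.1 (m - 1))))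
          < (X m).support.min' (supp_ne (hXb.1 m)) := by
        have h5 := hcrX (m - 1)
        have h6 : m - 1 + 1 = m := by omega
        rw [h6] at h5
        exact h5
      have hmm : f ((X (k - 1)).support.max' (supp_ne (hXb.1 (k - 1))))
          ≤ f ((X (m - 1)).support.max' (supp_ne (hXb.1 (m - 1)))) :=
        hmono (isBlock_maxmono hXb (by omega))
      omega
  have hgen : ∀ m, k ≤ m → X m ∈ spanSet (Xs (List.ofFn fun i : Fin k => X (i : ℕ))) := by
    intro m hkm
    apply hμ _ hlB
    exact ⟨hXb.1 m, mem_tail_span hTb (hXT m) (fun i hi => hbound m hkm i hi)⟩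
  intro v hv
  obtain ⟨hv0, hvmem⟩ := hv
  refine ⟨hv0, ?_⟩
  have hle : Submodule.span F (Set.range fun m => X (m + k)) ≤
      Submodule.span F (Set.range (Xs (List.ofFn fun i : Fin k => X (i : ℕ)))) := by
    rw [Submodule.span_le]
    rintro w ⟨m, rfl⟩
    exact (hgen (m + k) (by omega)).2
  exact hle hvmem
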